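/- For n odd and any positive semidefinite ρ on H_1 ⊗ ⋯ ⊗ H_n, the operator Σ_{B ⊊ {1,…,n}} (−1)^{|B|} ρ_B (the sum over proper subsets only) is positive semidefinite; equivalently Λ^(n)(ρ) + ρ ≥ 0. -/

import Mathlib

open ComplexOrder

/-- `ρ_B`: the partial trace of `ρ` over the systems outside `B`, padded with identity
operators on those systems (so `ρ_∅ = Tr(ρ)·I` and `ρ_{1,…,n} = ρ`). -/
noncomputable def subsystemPad {n : ℕ} {d : Fin n → ℕ}
    (ρ : Matrix (∀ i, Fin (d i)) (∀ i, Fin (d i)) ℂ) (B : Finset (Fin n)) :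
    Matrix (∀ i, Fin (d i)) (∀ i, Fin (d i)) ℂ :=
  Matrix.of fun x y =>
    if ∀ i ∉ B, x i = y i then
      ∑ w : ∀ i, Fin (d i),
        if ∀ i ∈ B, w i = x i then ρ w (fun i => if i ∈ B then y i else w i) else 0
    else 0

/-- The generalised reduction map `Λ⁽ⁿ⁾(ρ) = Σ_{B ⊆ {1,…,n}} (−1)^{|B|} ρ_B`. -/
noncomputable def genRed {n : ℕ} {d : Fin n → ℕ}
    (ρ : Matrix (∀ i, Fin (d i)) (∀ i, Fin (d i)) ℂ) :
    Matrix (∀ i, Fin (d i)) (∀ i, Fin (d i)) ℂ :=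
  ∑ B : Finset (Fin n), ((-1 : ℂ) ^ B.card) • subsystemPad ρ B

namespace GRaux

open Finset
open scoped symmDiff

variable {n : ℕ} {d : Fin n → ℕ}

/-- merge: take `x` on `B`, `y` off `B`. -/
def mrg (B : Finset (Fin n)) (x y : ∀ i, Fin (d i)) : ∀ i, Fin (d i) :=
  fun i => if i ∈ B then x i else y i

lemma mrg_mrg (S T : Finset (Fin n)) (a b : ∀ i, Fin (d i)) :
    mrg S (mrg T a b) (mrg T b a) = mrg (S ∆ T) b a := by
  funext i
  by_cases hS : i ∈ S <;> by_cases hT : i ∈ T <;>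
    simp [mrg, hS, hT, Finset.mem_symmDiff]

lemma mrg_empty (a b : ∀ i, Fin (d i)) : mrg (∅ : Finset (Fin n)) a b = b := by
  funext i; simp [mrg]

lemma mrg_univ (a b : ∀ i, Fin (d i)) : mrg (Finset.univ : Finset (Fin n)) a b = a := by
  funext i; simp [mrg]

lemma mrg_absorb (B : Finset (Fin n)) (a c w : ∀ i, Fin (d i)) :
    mrg B a (mrg B c w) = mrg B a w := by
  funext i; by_cases hi : i ∈ B <;> simp [mrg, hi]

lemma cond_iff (B : Finset (Fin n)) (x y w : ∀ i, Fin (d i)) :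
    ((∀ i ∉ B, x i = y i) ∧ (∀ i ∈ B, w i = x i)) ↔ x = mrg B w y := by
  constructor
  · rintro ⟨h1, h2⟩
    funext i
    by_cases hi : i ∈ B
    · simp [mrg, hi, (h2 i hi).symm]
    · simp [mrg, hi, h1 i hi]
  · rintro rfl
    refine ⟨fun i hi => by simp [mrg, hi], fun i hi => by simp [mrg, hi]⟩

/-- sign of a subset -/
def sgn (S : Finset (Fin n)) : ℂ := (-1) ^ S.card

lemma sgn_eq_prod (S : Finset (Fin n)) :
    sgn S = ∏ i : Fin n, (if i ∈ S then (-1 : ℂ) else 1) := by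
  rw [sgn, Finset.prod_ite_mem, Finset.univ_inter, Finset.prod_const]

lemma star_sgn (S : Finset (Fin n)) : star (sgn S) = sgn S := by
  simp [sgn]

lemma sgn_mul (S T : Finset (Fin n)) : sgn S * sgn T = sgn (S ∆ T) := by
  rw [sgn_eq_prod, sgn_eq_prod, sgn_eq_prod, ← Finset.prod_mul_distrib]
  refine Finset.prod_congr rfl fun i _ => ?_
  by_cases hS : i ∈ S <;> by_cases hT : i ∈ T <;>
    simp [hS, hT, Finset.mem_symmDiff]

/-- the scalar quadratic form -/
noncomputable def quadF (u : (∀ i, Fin (d i)) → ℂ) (M : Matrix (∀ i, Fin (d i)) (∀ i, Fin (d i)) ℂ) : ℂ :=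
  ∑ x, ∑ y, star (u x) * M x y * u y

lemma dot_eq_quadF (u : (∀ i, Fin (d i)) → ℂ)
    (M : Matrix (∀ i, Fin (d i)) (∀ i, Fin (d i)) ℂ) :
    dotProduct (star u) (M.mulVec u) = quadF u M := by
  simp only [dotProduct, Matrix.mulVec, quadF, Pi.star_apply, Finset.mul_sum]
  exact Finset.sum_congr rfl fun x _ => Finset.sum_congr rfl fun y _ => by ring

/-- the quadratic form of a padded matrix, in merged form -/
lemma quadF_pad (u : (∀ i, Fin (d i)) → ℂ)
    (ρ : Matrix (∀ i, Fin (d i)) (∀ i, Fin (d i)) ℂ) (B : Finset (Fin n)) :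
    quadF u (subsystemPad ρ B) =
      ∑ y, ∑ w, star (u (mrg B w y)) * ρ w (mrg B y w) * u y := by
  have key : ∀ x y : ∀ i, Fin (d i),
      star (u x) * (subsystemPad ρ B) x y * u y =
      ∑ w, (if x = mrg B w y then star (u x) * ρ w (mrg B y w) * u y else 0) := by
    intro x y
    by_cases h1 : ∀ i ∉ B, x i = y i
    · simp only [subsystemPad, Matrix.of_apply, if_pos h1]
      rw [Finset.mul_sum, Finset.sum_mul]
      refine Finset.sum_congr rfl fun w _ => ?_
      by_cases h2 : ∀ i ∈ B, w i = x i
      · rw [if_pos h2, if_pos ((cond_iff B x y w).mp ⟨h1, h2⟩)]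
        have : (fun i => if i ∈ B then y i else w i) = mrg B y w := rfl
        rw [this]
      · rw [if_neg h2, if_neg (fun hc => h2 ((cond_iff B x y w).mpr hc).2)]
        ring
    · simp only [subsystemPad, Matrix.of_apply, if_neg h1]
      simp only [mul_zero, zero_mul]
      exact (Finset.sum_eq_zero fun w _ =>
        if_neg (fun hc => h1 ((cond_iff B x y w).mpr hc).1)).symm
  calc quadF u (subsystemPad ρ B)
      = ∑ x, ∑ y, ∑ w, (if x = mrg B w y then star (u x) * ρ w (mrg B y w) * u y else 0) :=
        Finset.sum_congr rfl fun x _ => Finset.sum_congr rfl fun y _ => key x y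
    _ = ∑ y, ∑ x, ∑ w, (if x = mrg B w y then star (u x) * ρ w (mrg B y w) * u y else 0) :=
        Finset.sum_comm
    _ = ∑ y, ∑ w, ∑ x, (if x = mrg B w y then star (u x) * ρ w (mrg B y w) * u y else 0) :=
        Finset.sum_congr rfl fun y _ => Finset.sum_comm
    _ = ∑ y, ∑ w, star (u (mrg B w y)) * ρ w (mrg B y w) * u y := by
        refine Finset.sum_congr rfl fun y _ => Finset.sum_congr rfl fun w _ => ?_
        rw [Finset.sum_ite_eq' Finset.univ (mrg B w y)
          (fun x => star (u x) * ρ w (mrg B y w) * u y), if_pos (Finset.mem_univ _)]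

end GRaux

namespace GRaux

open Finset
open scoped symmDiff

variable {n : ℕ} {d : Fin n → ℕ}

lemma sum_comm3 {α β γ : Type*} [Fintype α] [Fintype β] [Fintype γ] (f : α → β → γ → ℂ) :
    ∑ a, ∑ b, ∑ c, f a b c = ∑ c, ∑ a, ∑ b, f a b c :=
  (Finset.sum_congr rfl fun a _ => Finset.sum_comm).trans Finset.sum_comm

/-- the doubled vector for the rank-one piece -/
noncomputable def Wf (u v : (∀ i, Fin (d i)) → ℂ) (S : Finset (Fin n))
    (p : (∀ i, Fin (d i)) × (∀ i, Fin (d i))) : ℂ :=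
  star (u (mrg S p.2 p.1)) * v (mrg S p.1 p.2)

/-- the quadratic form of the rank-one piece, pair form -/
noncomputable def hh (u v : (∀ i, Fin (d i)) → ℂ) (B : Finset (Fin n)) : ℂ :=
  ∑ p : (∀ i, Fin (d i)) × (∀ i, Fin (d i)), Wf u v B p * star (Wf u v ∅ p)

/-- the swap equivalence -/
def swp (T : Finset (Fin n)) : ((∀ i, Fin (d i)) × (∀ i, Fin (d i))) ≃
    ((∀ i, Fin (d i)) × (∀ i, Fin (d i))) where
  toFun p := (mrg T p.2 p.1, mrg T p.1 p.2)
  invFun p := (mrg T p.2 p.1, mrg T p.1 p.2)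
  left_inv p := by
    ext : 1
    · show mrg T (mrg T p.1 p.2) (mrg T p.2 p.1) = p.1
      rw [mrg_mrg, symmDiff_self, Finset.bot_eq_empty, mrg_empty]
    · show mrg T (mrg T p.2 p.1) (mrg T p.1 p.2) = p.2
      rw [mrg_mrg, symmDiff_self, Finset.bot_eq_empty, mrg_empty]
  right_inv p := by
    ext : 1
    · show mrg T (mrg T p.1 p.2) (mrg T p.2 p.1) = p.1
      rw [mrg_mrg, symmDiff_self, Finset.bot_eq_empty, mrg_empty]
    · show mrg T (mrg T p.2 p.1) (mrg T p.1 p.2) = p.2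
      rw [mrg_mrg, symmDiff_self, Finset.bot_eq_empty, mrg_empty]

lemma Wf_swp (u v : (∀ i, Fin (d i)) → ℂ) (S T : Finset (Fin n))
    (p : (∀ i, Fin (d i)) × (∀ i, Fin (d i))) :
    Wf u v S (swp T p) = Wf u v (S ∆ T) p := by
  obtain ⟨y, y'⟩ := p
  show star (u (mrg S (mrg T y y') (mrg T y' y))) * v (mrg S (mrg T y' y) (mrg T y y'))
    = star (u (mrg (S ∆ T) y' y)) * v (mrg (S ∆ T) y y')
  rw [mrg_mrg, mrg_mrg]

lemma hh_swap_sum (u v : (∀ i, Fin (d i)) → ℂ) (S T : Finset (Fin n)) :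
    ∑ p : (∀ i, Fin (d i)) × (∀ i, Fin (d i)), Wf u v S p * star (Wf u v T p)
      = hh u v (S ∆ T) := by
  have hbot : (∅ : Finset (Fin n)) ∆ T = T := by
    rw [← Finset.bot_eq_empty, bot_symmDiff]
  have hST : (S ∆ T) ∆ T = S := symmDiff_symmDiff_cancel_right T S
  rw [hh]
  refine Fintype.sum_equiv (swp T) _ _ fun p => ?_
  rw [Wf_swp, Wf_swp, hST, hbot]

/-- symmetric difference as an equivalence -/
def sdEquiv (S : Finset (Fin n)) : Finset (Fin n) ≃ Finset (Fin n) where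
  toFun T := S ∆ T
  invFun T := S ∆ T
  left_inv T := symmDiff_symmDiff_cancel_left S T
  right_inv T := symmDiff_symmDiff_cancel_left S T

lemma core_eq (u v : (∀ i, Fin (d i)) → ℂ) :
    ∑ p : (∀ i, Fin (d i)) × (∀ i, Fin (d i)),
        (∑ S : Finset (Fin n), sgn S * Wf u v S p) * star (∑ T : Finset (Fin n), sgn T * Wf u v T p)
      = (2 ^ n : ℂ) * ∑ B : Finset (Fin n), sgn B * hh u v B := by
  have expand : ∀ p, (∑ S : Finset (Fin n), sgn S * Wf u v S p) *
      star (∑ T : Finset (Fin n), sgn T * Wf u v T p)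
      = ∑ S : Finset (Fin n), ∑ T : Finset (Fin n),
          sgn S * sgn T * (Wf u v S p * star (Wf u v T p)) := by
    intro p
    rw [star_sum, Finset.sum_mul_sum]
    refine Finset.sum_congr rfl fun S _ => Finset.sum_congr rfl fun T _ => ?_
    rw [star_mul', star_sgn]; ring
  calc ∑ p, (∑ S : Finset (Fin n), sgn S * Wf u v S p) *
        star (∑ T : Finset (Fin n), sgn T * Wf u v T p)
      = ∑ p, ∑ S : Finset (Fin n), ∑ T : Finset (Fin n),
          sgn S * sgn T * (Wf u v S p * star (Wf u v T p)) :=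
        Finset.sum_congr rfl fun p _ => expand p
    _ = ∑ T : Finset (Fin n), ∑ p, ∑ S : Finset (Fin n),
          sgn S * sgn T * (Wf u v S p * star (Wf u v T p)) := sum_comm3 _
    _ = ∑ S : Finset (Fin n), ∑ T : Finset (Fin n), ∑ p,
          sgn S * sgn T * (Wf u v S p * star (Wf u v T p)) := sum_comm3 _
    _ = ∑ S : Finset (Fin n), ∑ T : Finset (Fin n), sgn S * sgn T * hh u v (S ∆ T) := by
        refine Finset.sum_congr rfl fun S _ => Finset.sum_congr rfl fun T _ => ?_
        rw [← Finset.mul_sum, hh_swap_sum]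
    _ = ∑ S : Finset (Fin n), ∑ U : Finset (Fin n), sgn U * hh u v U := by
        refine Finset.sum_congr rfl fun S _ => ?_
        refine Fintype.sum_equiv (sdEquiv S) _ _ fun T => ?_
        simp only [sdEquiv, Equiv.coe_fn_mk]
        rw [sgn_mul]
    _ = (2 ^ n : ℂ) * ∑ B : Finset (Fin n), sgn B * hh u v B := by
        rw [Finset.sum_const, nsmul_eq_mul]
        congr 1
        simp [Fintype.card_finset]

end GRaux

namespace GRaux

open Finset
open scoped symmDiff
open Matrix

variable {n : ℕ} {d : Fin n → ℕ}

lemma quadF_pad_decomp (u : (∀ i, Fin (d i)) → ℂ)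
    (C : Matrix (∀ i, Fin (d i)) (∀ i, Fin (d i)) ℂ) (B : Finset (Fin n)) :
    quadF u (subsystemPad (Cᴴ * C) B) = ∑ k, hh u (fun x => C k x) B := by
  rw [quadF_pad]
  calc ∑ y, ∑ w, star (u (mrg B w y)) * (Cᴴ * C) w (mrg B y w) * u y
      = ∑ y, ∑ w, ∑ k, star (u (mrg B w y)) * (star (C k w) * C k (mrg B y w)) * u y := by
        refine Finset.sum_congr rfl fun y _ => Finset.sum_congr rfl fun w _ => ?_
        rw [Matrix.mul_apply, Finset.mul_sum, Finset.sum_mul]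
        exact Finset.sum_congr rfl fun k _ => by rw [Matrix.conjTranspose_apply]
    _ = ∑ k, ∑ y, ∑ w, star (u (mrg B w y)) * (star (C k w) * C k (mrg B y w)) * u y :=
        sum_comm3 _
    _ = ∑ k, hh u (fun x => C k x) B := by
        refine Finset.sum_congr rfl fun k _ => ?_
        rw [hh, Fintype.sum_prod_type]
        refine Finset.sum_congr rfl fun y _ => Finset.sum_congr rfl fun w _ => ?_
        show _ = Wf u (fun x => C k x) B (y, w) * star (Wf u (fun x => C k x) ∅ (y, w))
        simp only [Wf, mrg_empty, star_mul', star_star]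
        ring

lemma sum_sgn_hh_nonneg (u v : (∀ i, Fin (d i)) → ℂ) :
    0 ≤ ∑ B : Finset (Fin n), sgn B * hh u v B := by
  have h1 : (0:ℂ) ≤ (2 ^ n : ℂ) * ∑ B : Finset (Fin n), sgn B * hh u v B := by
    rw [← core_eq]
    exact Finset.sum_nonneg fun p _ => mul_star_self_nonneg _
  have h2 : (2:ℂ) ^ n = (((2:ℝ) ^ n : ℝ) : ℂ) := by push_cast; ring
  rw [h2] at h1
  have hpos : (0:ℝ) < 2 ^ n := by positivity
  rw [Complex.le_def] at h1 ⊢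
  obtain ⟨hre, him⟩ := h1
  rw [Complex.zero_re, Complex.re_ofReal_mul] at hre
  rw [Complex.zero_im, Complex.im_ofReal_mul] at him
  constructor
  · rw [Complex.zero_re]; nlinarith
  · rw [Complex.zero_im]
    rcases mul_eq_zero.mp him.symm with h | h
    · exact absurd h (ne_of_gt hpos)
    · exact h.symm

lemma hh_univ_nonneg (u v : (∀ i, Fin (d i)) → ℂ) :
    0 ≤ hh u v Finset.univ := by
  have key : hh u v Finset.univ = (∑ y, v y * u y) * star (∑ y, v y * u y) := by
    rw [hh, star_sum, Finset.sum_mul_sum, Fintype.sum_prod_type]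
    refine Finset.sum_congr rfl fun y _ => Finset.sum_congr rfl fun w _ => ?_
    show Wf u v Finset.univ (y, w) * star (Wf u v ∅ (y, w)) = _
    simp only [Wf, mrg_empty, mrg_univ, star_mul', star_star]
    ring
  rw [key]
  exact mul_star_self_nonneg _

end GRaux

namespace GRaux

open Finset
open scoped symmDiff
open Matrix

variable {n : ℕ} {d : Fin n → ℕ}

lemma mrg_of_eq {B : Finset (Fin n)} {w y : ∀ i, Fin (d i)}
    (h : ∀ i ∈ B, w i = y i) : mrg B y w = w := by
  funext i
  by_cases hi : i ∈ B
  · simp [mrg, hi, (h i hi).symm]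
  · simp [mrg, hi]

lemma pad_isHermitian (ρ : Matrix (∀ i, Fin (d i)) (∀ i, Fin (d i)) ℂ)
    (hρ : ρ.IsHermitian) (B : Finset (Fin n)) :
    (subsystemPad ρ B).IsHermitian := by
  refine Matrix.ext fun x y => ?_
  rw [Matrix.conjTranspose_apply]
  by_cases h1 : ∀ i ∉ B, x i = y i
  · have h1' : ∀ i ∉ B, y i = x i := fun i hi => (h1 i hi).symm
    simp only [subsystemPad, Matrix.of_apply, if_pos h1, if_pos h1', star_sum]
    have step : ∀ w, star (if ∀ i ∈ B, w i = y i then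
          ρ w (fun i => if i ∈ B then x i else w i) else 0)
        = (if ∀ i ∈ B, w i = y i then ρ (mrg B x w) w else 0) := by
      intro w
      by_cases h2 : ∀ i ∈ B, w i = y i
      · rw [if_pos h2, if_pos h2]
        exact hρ.apply (mrg B x w) w
      · rw [if_neg h2, if_neg h2, star_zero]
    rw [Finset.sum_congr rfl fun w _ => step w]
    rw [← Finset.sum_filter, ← Finset.sum_filter]
    refine Finset.sum_nbij' (fun w => mrg B x w) (fun w => mrg B y w) ?_ ?_ ?_ ?_ ?_
    · intro w hw
      simp only [Finset.mem_filter, Finset.mem_univ, true_and] at hw ⊢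
      intro i hi; simp [mrg, hi]
    · intro w hw
      simp only [Finset.mem_filter, Finset.mem_univ, true_and] at hw ⊢
      intro i hi; simp [mrg, hi]
    · intro w hw
      simp only [Finset.mem_filter, Finset.mem_univ, true_and] at hw
      show mrg B y (mrg B x w) = w
      rw [mrg_absorb]
      exact mrg_of_eq hw
    · intro w hw
      simp only [Finset.mem_filter, Finset.mem_univ, true_and] at hw
      show mrg B x (mrg B y w) = w
      rw [mrg_absorb]
      exact mrg_of_eq hw
    · intro w hw
      simp only [Finset.mem_filter, Finset.mem_univ, true_and] at hw
      show ρ (mrg B x w) w = ρ (mrg B x w) (mrg B y (mrg B x w))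
      rw [mrg_absorb, mrg_of_eq hw]
  · have h1' : ¬ ∀ i ∉ B, y i = x i := fun h => h1 (fun i hi => (h i hi).symm)
    simp [subsystemPad, if_neg h1, if_neg h1']

lemma pad_univ (ρ : Matrix (∀ i, Fin (d i)) (∀ i, Fin (d i)) ℂ) :
    subsystemPad ρ Finset.univ = ρ := by
  refine Matrix.ext fun x y => ?_
  simp only [subsystemPad, Matrix.of_apply]
  rw [if_pos (fun i hi => absurd (Finset.mem_univ i) hi)]
  have step : ∀ w : ∀ i, Fin (d i),
      (if ∀ i ∈ Finset.univ, w i = x i then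
        ρ w (fun i => if i ∈ Finset.univ then y i else w i) else 0)
      = (if w = x then ρ w y else 0) := by
    intro w
    have hc : (∀ i ∈ Finset.univ, w i = x i) ↔ w = x := by
      simp [funext_iff]
    have hf : (fun i => if i ∈ Finset.univ then y i else w i) = y := by
      funext i; simp
    rw [hf, if_congr hc rfl rfl]
  rw [Finset.sum_congr rfl fun w _ => step w, Finset.sum_ite_eq' Finset.univ x (fun w => ρ w y),
    if_pos (Finset.mem_univ x)]

end GRaux

open GRaux Matrix in
/-- For `n` odd and any positive semidefinite `ρ` on `H_1 ⊗ ⋯ ⊗ H_n`, the operator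
`Σ_{B ⊊ {1,…,n}} (−1)^{|B|} ρ_B` (sum over proper subsets only) is positive semidefinite;
equivalently `Λ⁽ⁿ⁾(ρ) + ρ ≥ 0`. -/
theorem genRed_proper_subsets_positive (n : ℕ) (hn : Odd n) (d : Fin n → ℕ)
    (ρ : Matrix (∀ i, Fin (d i)) (∀ i, Fin (d i)) ℂ) (hρ : ρ.PosSemidef) :
    (∑ B ∈ Finset.univ.filter (fun B : Finset (Fin n) => B ≠ Finset.univ),
        ((-1 : ℂ) ^ B.card) • subsystemPad ρ B).PosSemidef ∧
    (genRed ρ + ρ).PosSemidef := by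
  obtain ⟨C, hC⟩ : ∃ C : Matrix (∀ i, Fin (d i)) (∀ i, Fin (d i)) ℂ, ρ = Cᴴ * C := by
    classical
    open scoped MatrixOrder Matrix.Norms.L2Operator in
    exact CStarAlgebra.nonneg_iff_eq_star_mul_self.mp hρ.nonneg
  set filt := Finset.univ.filter (fun B : Finset (Fin n) => B ≠ Finset.univ) with hfilt
  set L := ∑ B ∈ filt, ((-1 : ℂ) ^ B.card) • subsystemPad ρ B with hL
  have hsgn_univ : sgn (Finset.univ : Finset (Fin n)) = -1 := by
    rw [sgn, Finset.card_univ, Fintype.card_fin, Odd.neg_one_pow hn]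
  have hfilter_sum : ∀ f : Finset (Fin n) → ℂ,
      ∑ B ∈ filt, f B + f Finset.univ = ∑ B : Finset (Fin n), f B := by
    intro f
    rw [hfilt, Finset.filter_ne']
    exact Finset.sum_erase_add _ _ (Finset.mem_univ _)
  have hHerm : L.IsHermitian := by
    show Lᴴ = L
    rw [hL, Matrix.conjTranspose_sum]
    refine Finset.sum_congr rfl fun B _ => ?_
    rw [Matrix.conjTranspose_smul, (pad_isHermitian ρ hρ.1 B).eq]
    congr 1
    simp
  have hQuad : ∀ u, 0 ≤ dotProduct (star u) (L *ᵥ u) := by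
    intro u
    rw [dot_eq_quadF]
    have lin : quadF u L = ∑ B ∈ filt, sgn B * quadF u (subsystemPad ρ B) := by
      rw [quadF]
      calc ∑ x, ∑ y, star (u x) * L x y * u y
          = ∑ x, ∑ y, ∑ B ∈ filt, sgn B * (star (u x) * (subsystemPad ρ B) x y * u y) := by
            refine Finset.sum_congr rfl fun x _ => Finset.sum_congr rfl fun y _ => ?_
            rw [hL, Matrix.sum_apply, Finset.mul_sum, Finset.sum_mul]
            refine Finset.sum_congr rfl fun B _ => ?_
            rw [Matrix.smul_apply, smul_eq_mul, sgn]
            ring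
        _ = ∑ B ∈ filt, ∑ x, ∑ y, sgn B * (star (u x) * (subsystemPad ρ B) x y * u y) := by
            exact (Finset.sum_congr rfl fun x _ => Finset.sum_comm).trans Finset.sum_comm
        _ = ∑ B ∈ filt, sgn B * quadF u (subsystemPad ρ B) := by
            refine Finset.sum_congr rfl fun B _ => ?_
            rw [quadF, Finset.mul_sum]
            exact Finset.sum_congr rfl fun x _ => (Finset.mul_sum _ _ _).symm
    rw [lin, hC]
    have step : ∀ B, sgn B * quadF u (subsystemPad (Cᴴ * C) B)
        = ∑ k, sgn B * hh u (fun x => C k x) B := by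
      intro B
      rw [quadF_pad_decomp, Finset.mul_sum]
    calc ∑ B ∈ filt, sgn B * quadF u (subsystemPad (Cᴴ * C) B)
        = ∑ B ∈ filt, ∑ k, sgn B * hh u (fun x => C k x) B :=
          Finset.sum_congr rfl fun B _ => step B
      _ = ∑ k, ∑ B ∈ filt, sgn B * hh u (fun x => C k x) B := Finset.sum_comm
      _ ≥ 0 := by
          refine Finset.sum_nonneg fun k _ => ?_
          have hsplit : ∑ B ∈ filt, sgn B * hh u (fun x => C k x) B
              = (∑ B : Finset (Fin n), sgn B * hh u (fun x => C k x) B)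
                + hh u (fun x => C k x) Finset.univ := by
            rw [← hfilter_sum (fun B => sgn B * hh u (fun x => C k x) B)]
            rw [hsgn_univ]
            ring
          rw [hsplit]
          exact add_nonneg (sum_sgn_hh_nonneg u _) (hh_univ_nonneg u _)
  have hLpsd : L.PosSemidef := Matrix.posSemidef_iff_dotProduct_mulVec.mpr ⟨hHerm, hQuad⟩
  have hGen : genRed ρ + ρ = L := by
    have : ∑ B : Finset (Fin n), ((-1 : ℂ) ^ B.card) • subsystemPad ρ B
        = L + ((-1 : ℂ) ^ (Finset.univ : Finset (Fin n)).card) • subsystemPad ρ Finset.univ := by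
      rw [hL, hfilt, Finset.filter_ne']
      exact (Finset.sum_erase_add _ _ (Finset.mem_univ _)).symm
    rw [genRed, this, pad_univ, Finset.card_univ, Fintype.card_fin, Odd.neg_one_pow hn,
      neg_smul, one_smul]
    abel
  exact ⟨hLpsd, hGen ▸ hLpsd⟩
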